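/- For any two vertices a, b of a finite connected graph G with edge set E, E_a T_b + E_b T_a = 2|E| R_{ab}, where R_{ab} is the effective resistance between a and b when each edge is a unit resistor. -/

import Mathlib

open Finset Matrix Polynomial

/-- The transition matrix of the simple random walk on a graph:
`P i j = 1/deg(i)` if `i ~ j`, and `0` otherwise. -/
noncomputable def transMatrix {V : Type*} [Fintype V] (G : SimpleGraph V)
    [DecidableRel G.Adj] : Matrix V V ℝ :=
  fun i j => if G.Adj i j then (1 : ℝ) / (G.degree i) else 0

/-- The stationary distribution of the simple random walk: `π i = deg(i) / (2|E|)`. -/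
noncomputable def stationary {V : Type*} [Fintype V] [DecidableEq V] (G : SimpleGraph V)
    [DecidableRel G.Adj] : V → ℝ :=
  fun i => (G.degree i : ℝ) / (2 * G.edgeFinset.card)

/-- `H` is the table of expected hitting times of the simple random walk on `G`:
`H a b = E_a T_b`.  It is characterized by `H b b = 0` and the one-step
(first-step analysis) equations `H a b = 1 + ∑_j P a j * H j b` for `a ≠ b`. -/
def IsHittingTime {V : Type*} [Fintype V] (G : SimpleGraph V) [DecidableRel G.Adj]
    (H : V → V → ℝ) : Prop :=
  (∀ b, H b b = 0) ∧ ∀ a b, a ≠ b → H a b = 1 + ∑ j, transMatrix G a j * H j b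

/-- `R` is the table of effective resistances of `G` (unit resistor on each edge):
`R a b = v a - v b` where `v` is a potential for a unit current flow from `a` to `b`,
i.e. `L v = 1_a - 1_b` for the graph Laplacian `L`. -/
def IsEffectiveResistance {V : Type*} [Fintype V] [DecidableEq V] (G : SimpleGraph V)
    [DecidableRel G.Adj] (R : V → V → ℝ) : Prop :=
  ∀ a b, ∃ v : V → ℝ,
    G.lapMatrix ℝ *ᵥ v =
      (fun x => (if x = a then (1 : ℝ) else 0) - (if x = b then (1 : ℝ) else 0)) ∧
    R a b = v a - v b

/-- Chandra et al.'s identity: for any two vertices `a, b` of a finite connected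
graph, `E_a T_b + E_b T_a = 2|E| R_{ab}`. -/
theorem hitting_time_sum_eq_resistance {V : Type*} [Fintype V] [DecidableEq V]
    (G : SimpleGraph V) [DecidableRel G.Adj] (hconn : G.Connected)
    (H : V → V → ℝ) (hH : IsHittingTime G H)
    (R : V → V → ℝ) (hR : IsEffectiveResistance G R) (a b : V) :
    H a b + H b a = 2 * G.edgeFinset.card * R a b := by
  obtain ⟨hH0, hHstep⟩ := hH
  obtain ⟨v, hv, hvab⟩ := hR a b
  -- auxiliary: positive degree at any vertex not equal to some other vertex
  have hdeg : ∀ x c : V, x ≠ c → (0:ℝ) < G.degree x := by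
    intro x c hxc
    have hadj : ∃ w, G.Adj x w := by
      obtain ⟨p⟩ := hconn.preconnected x c
      cases p with
      | nil => exact absurd rfl hxc
      | cons h _ => exact ⟨_, h⟩
    exact_mod_cast (G.degree_pos_iff_exists_adj x).mpr hadj
  -- row sums of the Laplacian are zero
  have hrow : ∀ y : V, ∑ x, G.lapMatrix ℝ y x = 0 := by
    intro y
    have h := congrFun (G.lapMatrix_mulVec_const_eq_zero (R := ℝ)) y
    simpa [Matrix.mulVec, dotProduct] using h
  -- total sum of (L *ᵥ f) is 0
  have htot : ∀ f : V → ℝ, ∑ x, (G.lapMatrix ℝ *ᵥ f) x = 0 := by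
    intro f
    have hsy : ((G.lapMatrix ℝ)ᵀ : Matrix V V ℝ) = G.lapMatrix ℝ := G.isSymm_lapMatrix (R := ℝ)
    calc ∑ x, (G.lapMatrix ℝ *ᵥ f) x = ∑ x, ∑ y, G.lapMatrix ℝ x y * f y := by
          simp [Matrix.mulVec, dotProduct]
      _ = ∑ y, ∑ x, G.lapMatrix ℝ x y * f y := Finset.sum_comm
      _ = ∑ y, (∑ x, G.lapMatrix ℝ y x) * f y := by
          apply Finset.sum_congr rfl
          intro y _
          rw [Finset.sum_mul]
          apply Finset.sum_congr rfl
          intro x _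
          congr 1
          exact (by simpa using congrFun (congrFun hsy x) y : G.lapMatrix ℝ y x = G.lapMatrix ℝ x y).symm
      _ = 0 := by simp [hrow]
  -- key Laplacian identity for hitting times
  have key : ∀ c : V, (G.lapMatrix ℝ *ᵥ fun x => H x c) =
      fun x => (G.degree x : ℝ) -
        (if x = c then 2 * (G.edgeFinset.card : ℝ) else 0) := by
    intro c
    have hne : ∀ x, x ≠ c → (G.lapMatrix ℝ *ᵥ fun y => H y c) x = G.degree x := by
      intro x hxc
      have hd := hdeg x c hxc
      have hdne : (G.degree x : ℝ) ≠ 0 := ne_of_gt hd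
      rw [G.lapMatrix_mulVec_apply]
      have hstep := hHstep x c hxc
      have hsum : ∑ j, transMatrix G x j * H j c
          = (∑ u ∈ G.neighborFinset x, H u c) / (G.degree x : ℝ) := by
        rw [Finset.sum_div, G.neighborFinset_eq_filter, Finset.sum_filter]
        apply Finset.sum_congr rfl
        intro j _
        by_cases h : G.Adj x j <;> simp [transMatrix, h, div_eq_mul_inv, mul_comm]
      rw [hsum] at hstep
      rw [hstep]
      field_simp
      ring
    have hc : (G.lapMatrix ℝ *ᵥ fun y => H y c) c
        = (G.degree c : ℝ) - 2 * (G.edgeFinset.card : ℝ) := by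
      have h1 := htot (fun y => H y c)
      rw [← Finset.add_sum_erase _ _ (Finset.mem_univ c)] at h1
      have h2 : ∑ y ∈ Finset.univ.erase c, (G.lapMatrix ℝ *ᵥ fun y => H y c) y
          = ∑ y ∈ Finset.univ.erase c, (G.degree y : ℝ) :=
        Finset.sum_congr rfl fun y hy => hne y (Finset.mem_erase.mp hy).1
      have h3 : ∑ y ∈ Finset.univ.erase c, (G.degree y : ℝ)
          = (∑ y, (G.degree y : ℝ)) - G.degree c := by
        rw [← Finset.add_sum_erase _ _ (Finset.mem_univ c)]; ring
      have h4 : ∑ y, (G.degree y : ℝ) = 2 * (G.edgeFinset.card : ℝ) := by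
        exact_mod_cast congrArg (Nat.cast : ℕ → ℝ) G.sum_degrees_eq_twice_card_edges
      rw [h2, h3, h4] at h1
      linarith
    funext x
    by_cases hxc : x = c
    · rw [if_pos hxc, hxc, hc]
    · rw [if_neg hxc, sub_zero]
      exact hne x hxc
  -- the function H · b - H · a - 2|E| v is in the kernel of L
  set m : ℝ := (G.edgeFinset.card : ℝ) with hm
  have hker : G.lapMatrix ℝ *ᵥ ((fun x => H x b) - (fun x => H x a) - (2*m) • v) = 0 := by
    rw [mulVec_sub, mulVec_sub, mulVec_smul, key a, key b, hv]
    funext x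
    simp only [Pi.sub_apply, Pi.smul_apply, Pi.zero_apply, smul_eq_mul]
    by_cases hxa : x = a <;> by_cases hxb : x = b <;> simp [hxa, hxb] <;> split_ifs <;> ring
  have hconst := (G.lapMatrix_mulVec_eq_zero_iff_forall_reachable).mp
    (by exact hker) a b (hconn.preconnected a b)
  simp only [Pi.sub_apply, Pi.smul_apply, smul_eq_mul, hH0] at hconst
  rw [hvab]
  linarith
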